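/- Every degree 3-critical graph on n ≥ 6 vertices contains a cycle of length 6. -/

import Mathlib

/-- A finite simple graph `G` on `n` vertices is *degree 3-critical* if it has
exactly `2n − 2` edges and no proper induced subgraph of minimum degree 3:
for every nonempty vertex set `S` strictly contained in the vertex set, the
induced subgraph `G[S]` has a vertex with at most 2 neighbours inside `S`. -/
def DegreeThreeCritical {V : Type} [Fintype V] (G : SimpleGraph V) : Prop :=
  G.edgeSet.ncard = 2 * Fintype.card V - 2 ∧
  ∀ S : Set V, S ⊂ Set.univ → S.Nonempty →
    ∃ v ∈ S, ({u | u ∈ S ∧ G.Adj v u}).ncard ≤ 2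

/-- `G` contains a cycle with exactly `ℓ` edges. -/
def HasCycleOfLength {W : Type} (G : SimpleGraph W) (ℓ : ℕ) : Prop :=
  ∃ (v : W) (c : G.Walk v v), c.IsCycle ∧ c.length = ℓ

set_option linter.unusedSectionVars false

namespace C6Aux
open Finset SimpleGraph
open scoped Classical

variable {V : Type} [Fintype V] {G : SimpleGraph V}

noncomputable def dIn (G : SimpleGraph V) (S : Finset V) (v : V) : ℕ :=
  #(S.filter (fun u => G.Adj v u))

noncomputable def dp (G : SimpleGraph V) (S : Finset V) : ℕ := ∑ v ∈ S, dIn G S v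

lemma dIn_le {S : Finset V} {v : V} (hv : v ∈ S) : dIn G S v ≤ S.card - 1 := by
  have h : S.filter (fun u => G.Adj v u) ⊆ S.erase v := by
    intro u hu
    simp only [mem_filter] at hu
    exact mem_erase.2 ⟨fun h => G.irrefl (h ▸ hu.2), hu.1⟩
  calc dIn G S v ≤ (S.erase v).card := card_le_card h
    _ = S.card - 1 := card_erase_of_mem hv

lemma dIn_erase_self (S : Finset V) (v : V) : dIn G (S.erase v) v = dIn G S v := by
  unfold dIn
  congr 1
  ext u
  simp only [mem_filter, mem_erase]
  constructor
  · rintro ⟨⟨_, hu⟩, ha⟩; exact ⟨hu, ha⟩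
  · rintro ⟨hu, ha⟩; exact ⟨⟨fun h => G.irrefl (h ▸ ha), hu⟩, ha⟩

lemma dIn_erase_of_adj {S : Finset V} {v u : V} (hv : v ∈ S) (h : G.Adj u v) :
    dIn G (S.erase v) u + 1 = dIn G S u := by
  unfold dIn
  rw [Finset.filter_erase]
  rw [Finset.card_erase_of_mem (by simp [mem_filter, hv, h]), Nat.sub_add_cancel]
  exact Finset.card_pos.2 ⟨v, by simp [mem_filter, hv, h]⟩

lemma dIn_erase_of_not_adj {S : Finset V} {v u : V} (h : ¬ G.Adj u v) :
    dIn G (S.erase v) u = dIn G S u := by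
  unfold dIn
  rw [Finset.filter_erase, Finset.erase_eq_of_notMem (by simp [mem_filter]; tauto)]

lemma dp_erase {S : Finset V} {v : V} (hv : v ∈ S) :
    dp G (S.erase v) + 2 * dIn G S v = dp G S := by
  unfold dp
  rw [← Finset.add_sum_erase _ _ hv]
  have h1 : ∀ u ∈ S.erase v, dIn G S u = dIn G (S.erase v) u + (if G.Adj u v then 1 else 0) := by
    intro u hu
    by_cases h : G.Adj u v
    · simp [h, dIn_erase_of_adj hv h]
    · simp [h, dIn_erase_of_not_adj h]
  rw [Finset.sum_congr rfl h1, Finset.sum_add_distrib, Finset.sum_boole]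
  have h2 : #((S.erase v).filter fun u => G.Adj u v) = dIn G S v := by
    rw [← dIn_erase_self S v]
    unfold dIn
    congr 1
    ext u
    simp only [mem_filter]
    exact and_congr_right (fun _ => G.adj_comm u v)
  rw [h2]
  push_cast
  ring

lemma ne_univ_of_card_lt {S : Finset V} (h : S.card < Fintype.card V) : S ≠ univ := by
  intro hs; rw [hs, card_univ] at h; omega

lemma crit (hG : DegreeThreeCritical G) {S : Finset V} (hS : S ≠ univ) (hne : S.Nonempty) :
    ∃ v ∈ S, dIn G S v ≤ 2 := by
  obtain ⟨v, hv, h⟩ := hG.2 (↑S : Set V)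
    (Set.ssubset_univ_iff.2 (fun hc => hS (by
      apply Finset.coe_injective
      rw [hc, coe_univ])))
    ⟨hne.choose, by simpa using hne.choose_spec⟩
  refine ⟨v, by simpa using hv, ?_⟩
  have : {u | u ∈ (↑S : Set V) ∧ G.Adj v u} = ↑(S.filter (fun u => G.Adj v u)) := by
    ext u; simp
  rw [this, Set.ncard_coe_finset] at h
  exact h

lemma sparse (hG : DegreeThreeCritical G) :
    ∀ k, ∀ S : Finset V, S.card ≤ k → S ≠ univ → 2 ≤ S.card → dp G S + 6 ≤ 4 * S.card := by
  intro k
  induction k with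
  | zero => intro S h1 _ h3; omega
  | succ k ih =>
    intro S h1 hu h3
    by_cases h2 : S.card = 2
    · have : ∀ v ∈ S, dIn G S v ≤ 1 := fun v hv => by
        have := dIn_le (G := G) hv; omega
      have : dp G S ≤ ∑ _v ∈ S, 1 := Finset.sum_le_sum this
      simp at this
      omega
    · obtain ⟨v, hv, hd⟩ := crit hG hu ⟨(Finset.card_pos.1 (by omega)).choose,
        (Finset.card_pos.1 (by omega)).choose_spec⟩
      have hce : (S.erase v).card = S.card - 1 := card_erase_of_mem hv
      have h4 := ih (S.erase v) (by omega)
        (ne_univ_of_card_lt (by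
          have := Finset.card_le_univ S
          omega))
        (by omega)
      have h5 := dp_erase (G := G) hv
      omega

lemma dp_univ_eq (hG : DegreeThreeCritical G) :
    dp G (univ : Finset V) = 2 * (2 * Fintype.card V - 2) := by
  have h1 : dp G (univ : Finset V) = ∑ v, G.degree v := by
    apply Finset.sum_congr rfl
    intro v _
    unfold dIn
    rw [degree]
    congr 1
    ext u
    simp [mem_neighborFinset]
  rw [h1, SimpleGraph.sum_degrees_eq_twice_card_edges, ← hG.1]
  congr 1
  rw [← SimpleGraph.coe_edgeFinset, Set.ncard_coe_finset]

lemma min_degree (hG : DegreeThreeCritical G) (hn : 6 ≤ Fintype.card V) (v : V) :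
    3 ≤ G.degree v := by
  have hv : v ∈ (univ : Finset V) := mem_univ v
  have h1 := dp_erase (G := G) hv
  have h2 : dIn G univ v = G.degree v := by
    unfold dIn
    rw [degree]
    congr 1
    ext u
    simp [mem_neighborFinset]
  have h3 := sparse hG (Fintype.card V) (univ.erase v)
    (by rw [card_erase_of_mem hv, card_univ]; omega)
    (ne_univ_of_card_lt (by rw [card_erase_of_mem hv, card_univ]; omega))
    (by rw [card_erase_of_mem hv, card_univ]; omega)
  have h4 := dp_univ_eq hG
  rw [card_erase_of_mem hv, card_univ] at h3
  omega

lemma exists_deg3 (hG : DegreeThreeCritical G) (hn : 6 ≤ Fintype.card V) :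
    ∃ x : V, G.degree x = 3 := by
  by_contra h
  push_neg at h
  have h1 : ∀ v : V, 4 ≤ G.degree v := by
    intro v
    have := min_degree hG hn v
    have := h v
    omega
  have h2 : ∑ v, G.degree v = 2 * (2 * Fintype.card V - 2) := by
    rw [SimpleGraph.sum_degrees_eq_twice_card_edges, ← hG.1]
    congr 1
    rw [← SimpleGraph.coe_edgeFinset, Set.ncard_coe_finset]
  have h3 : (univ : Finset V).card • 4 ≤ ∑ v, G.degree v :=
    Finset.card_nsmul_le_sum _ _ _ (fun v _ => h1 v)
  rw [card_univ, smul_eq_mul] at h3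
  omega

lemma hasC6 {a b c d e f : V} (hab : G.Adj a b) (hbc : G.Adj b c) (hcd : G.Adj c d)
    (hde : G.Adj d e) (hef : G.Adj e f) (hfa : G.Adj f a)
    (hac : a ≠ c) (had : a ≠ d) (hae : a ≠ e)
    (hbd : b ≠ d) (hbe : b ≠ e) (hbf : b ≠ f)
    (hce : c ≠ e) (hcf : c ≠ f) (hdf : d ≠ f) :
    HasCycleOfLength G 6 := by
  have hab' := hab.ne
  have hbc' := hbc.ne
  have hcd' := hcd.ne
  have hde' := hde.ne
  have hef' := hef.ne
  have hfa' := hfa.ne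
  have h1 := hab'.symm; have h2 := hbc'.symm; have h3 := hcd'.symm
  have h4 := hde'.symm; have h5 := hef'.symm; have h6 := hfa'.symm
  have h7 := hac.symm; have h8 := had.symm; have h9 := hae.symm
  have h10 := hbd.symm; have h11 := hbe.symm; have h12 := hbf.symm
  have h13 := hce.symm; have h14 := hcf.symm; have h15 := hdf.symm
  refine ⟨a, .cons hab (.cons hbc (.cons hcd (.cons hde (.cons hef (.cons hfa .nil))))), ?_, rfl⟩
  rw [SimpleGraph.Walk.isCycle_def, SimpleGraph.Walk.isTrail_def]
  refine ⟨?_, by simp, ?_⟩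
  · simp only [Walk.edges_cons, Walk.edges_nil, List.nodup_cons, List.mem_cons,
      List.not_mem_nil, or_false, List.nodup_nil, and_true, Sym2.eq, Sym2.rel_iff',
      Prod.mk.injEq, Prod.swap_prod_mk]
    tauto
  · simp only [Walk.support_cons, Walk.support_nil, List.tail_cons, List.nodup_cons,
      List.mem_cons, List.not_mem_nil, or_false, List.nodup_nil, and_true]
    tauto


def IsF1 (G : SimpleGraph V) (S : Finset V) : Prop :=
  ∃ r s, r ∈ S ∧ s ∈ S ∧ r ≠ s ∧ G.Adj r s ∧
    ∀ v ∈ S, v ≠ r → v ≠ s →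
      (G.Adj v r ∧ G.Adj v s ∧ ∀ u ∈ S, u ≠ r → u ≠ s → u ≠ v → ¬ G.Adj v u)

def IsF23 (G : SimpleGraph V) (S : Finset V) : Prop :=
  ∃ r s p, r ∈ S ∧ s ∈ S ∧ p ∈ S ∧ r ≠ s ∧ r ≠ p ∧ s ≠ p ∧
    G.Adj r s ∧ G.Adj r p ∧ G.Adj s p ∧
    (∀ v ∈ S, v ≠ r → v ≠ s → v ≠ p →
      ((G.Adj v r ∧ G.Adj v s ∧ ¬ G.Adj v p) ∨ (G.Adj v r ∧ G.Adj v p ∧ ¬ G.Adj v s)) ∧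
      (∀ u ∈ S, u ≠ r → u ≠ s → u ≠ p → u ≠ v → ¬ G.Adj v u)) ∧
    (∃ q ∈ S, q ≠ r ∧ q ≠ s ∧ q ≠ p ∧ G.Adj q s) ∧
    (∃ w ∈ S, w ≠ r ∧ w ≠ s ∧ w ≠ p ∧ G.Adj w p)

def IsF4 (G : SimpleGraph V) (S : Finset V) : Prop :=
  ∃ a b c₁ c₂, a ∈ S ∧ b ∈ S ∧ c₁ ∈ S ∧ c₂ ∈ S ∧
    a ≠ b ∧ a ≠ c₁ ∧ a ≠ c₂ ∧ b ≠ c₁ ∧ b ≠ c₂ ∧ c₁ ≠ c₂ ∧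
    ¬ G.Adj a b ∧ G.Adj c₁ c₂ ∧ G.Adj c₁ a ∧ G.Adj c₁ b ∧ G.Adj c₂ a ∧ G.Adj c₂ b ∧
    (∀ v ∈ S, v ≠ a → v ≠ b → v ≠ c₁ → v ≠ c₂ →
      G.Adj v a ∧ G.Adj v b ∧ ∀ u ∈ S, u ≠ a → u ≠ b → u ≠ v → ¬ G.Adj v u) ∧
    (∃ c₃ ∈ S, c₃ ≠ a ∧ c₃ ≠ b ∧ c₃ ≠ c₁ ∧ c₃ ≠ c₂)

def Fam (G : SimpleGraph V) (S : Finset V) : Prop :=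
  HasCycleOfLength G 6 ∨ IsF1 G S ∨ IsF23 G S ∨ IsF4 G S

-- v is not in S facts
lemma not_mem_ne {S : Finset V} {v u : V} (hv : v ∉ S) (hu : u ∈ S) : v ≠ u :=
  fun h => hv (h ▸ hu)

section Step
variable {S : Finset V} {v : V}

/-- Adding `v` adjacent to both spine ends of a book. -/
lemma stepF1_ss {r s : V} (hv : v ∉ S) (hr : r ∈ S) (hs : s ∈ S) (hrs : r ≠ s) (hars : G.Adj r s)
    (hcl : ∀ w ∈ S, w ≠ r → w ≠ s →
      (G.Adj w r ∧ G.Adj w s ∧ ∀ u ∈ S, u ≠ r → u ≠ s → u ≠ w → ¬ G.Adj w u))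
    (hvr : G.Adj v r) (hvs : G.Adj v s)
    (honly : ∀ u ∈ S, G.Adj v u → u = r ∨ u = s) :
    IsF1 G (insert v S) := by
  refine ⟨r, s, mem_insert_of_mem hr, mem_insert_of_mem hs, hrs, hars, ?_⟩
  intro w hw hwr hws
  rcases mem_insert.1 hw with h | h
  · subst h
    refine ⟨hvr, hvs, ?_⟩
    intro u hu u1 u2 u3 hadj
    rcases mem_insert.1 hu with h' | h'
    · exact u3 h'
    · rcases honly u h' hadj with h'' | h'' <;> [exact u1 h''; exact u2 h'']
  · obtain ⟨o1, o2, o3⟩ := hcl w h hwr hws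
    refine ⟨o1, o2, ?_⟩
    intro u hu u1 u2 u3 hadj
    rcases mem_insert.1 hu with h' | h'
    · subst h'
      rcases honly w h hadj.symm with h'' | h'' <;> [exact hwr h''; exact hws h'']
    · exact o3 u h' u1 u2 u3 hadj

/-- Adding `v` adjacent to a spine end `r` and a page `p` of a book. -/
lemma stepF1_sp {r s p : V} (hv : v ∉ S) (hr : r ∈ S) (hs : s ∈ S) (hrs : r ≠ s) (hars : G.Adj r s)
    (hcl : ∀ w ∈ S, w ≠ r → w ≠ s →
      (G.Adj w r ∧ G.Adj w s ∧ ∀ u ∈ S, u ≠ r → u ≠ s → u ≠ w → ¬ G.Adj w u))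
    (hp : p ∈ S) (hpr : p ≠ r) (hps : p ≠ s)
    (hvr : G.Adj v r) (hvp : G.Adj v p)
    (honly : ∀ u ∈ S, G.Adj v u → u = r ∨ u = p) :
    IsF23 G (insert v S) ∨ IsF1 G (insert v S) := by
  obtain ⟨hp1, hp2, hp3⟩ := hcl p hp hpr hps
  have hvne : ∀ u ∈ S, v ≠ u := fun u hu => not_mem_ne hv hu
  by_cases hq : ∃ q ∈ S, q ≠ r ∧ q ≠ s ∧ q ≠ p
  · left
    obtain ⟨q, hqS, hq1, hq2, hq3⟩ := hq
    obtain ⟨hqa, hqb, hqc⟩ := hcl q hqS hq1 hq2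
    refine ⟨r, s, p, mem_insert_of_mem hr, mem_insert_of_mem hs, mem_insert_of_mem hp,
      hrs, hpr.symm, hps.symm,
      hars, hp1.symm, hp2.symm, ?_, ⟨q, mem_insert_of_mem hqS, hq1, hq2, hq3, hqb⟩,
      ⟨v, mem_insert_self v S, hvne r hr, hvne s hs, hvne p hp, hvp⟩⟩
    intro w hw hwr hws hwp
    rcases mem_insert.1 hw with h | h
    · subst h
      constructor
      · right
        refine ⟨hvr, hvp, fun hadj => ?_⟩
        rcases honly s hs hadj with h'' | h'' <;> [exact hrs h''.symm; exact hps h''.symm]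
      · intro u hu u1 u2 u3 u4 hadj
        rcases mem_insert.1 hu with h' | h'
        · exact u4 h'
        · rcases honly u h' hadj with h'' | h'' <;> [exact u1 h''; exact u3 h'']
    · obtain ⟨o1, o2, o3⟩ := hcl w h hwr hws
      constructor
      · exact Or.inl ⟨o1, o2, o3 p hp hpr hps (fun h' => hwp h'.symm)⟩
      · intro u hu u1 u2 u3 u4 hadj
        rcases mem_insert.1 hu with h' | h'
        · subst h'
          rcases honly w h hadj.symm with h'' | h'' <;> [exact hwr h''; exact hwp h'']
        · exact o3 u h' u1 u2 u4 hadj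
  · right
    push_neg at hq
    refine ⟨r, p, mem_insert_of_mem hr, mem_insert_of_mem hp,
      fun h => hpr h.symm, hp1.symm, ?_⟩
    intro w hw hwr hwp
    rcases mem_insert.1 hw with h | h
    · subst h
      refine ⟨hvr, hvp, ?_⟩
      intro u hu u1 u2 u3 hadj
      rcases mem_insert.1 hu with h' | h'
      · exact u3 h'
      · rcases honly u h' hadj with h'' | h'' <;> [exact u1 h''; exact u2 h'']
    · by_cases hws : w = s
      · subst hws
        refine ⟨hars.symm, hp2.symm, ?_⟩
        intro u hu u1 u2 u3 hadj
        rcases mem_insert.1 hu with h' | h'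
        · subst h'
          rcases honly w h hadj.symm with h'' | h'' <;> [exact hwr h''; exact hwp h'']
        · exact absurd (hq u h' u1 u3) u2
      · exact absurd (hq w h hwr hws) hwp

/-- Adding `v` adjacent to two pages of a book. -/
lemma stepF1_pp {r s p q : V} (hv : v ∉ S) (hr : r ∈ S) (hs : s ∈ S) (hrs : r ≠ s) (hars : G.Adj r s)
    (hcl : ∀ w ∈ S, w ≠ r → w ≠ s →
      (G.Adj w r ∧ G.Adj w s ∧ ∀ u ∈ S, u ≠ r → u ≠ s → u ≠ w → ¬ G.Adj w u))
    (hp : p ∈ S) (hpr : p ≠ r) (hps : p ≠ s)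
    (hqq : q ∈ S) (hqr : q ≠ r) (hqs : q ≠ s) (hpq : p ≠ q)
    (hvp : G.Adj v p) (hvq : G.Adj v q)
    (honly : ∀ u ∈ S, G.Adj v u → u = p ∨ u = q) :
    HasCycleOfLength G 6 ∨ IsF4 G (insert v S) := by
  obtain ⟨hpa, hpb, hpc⟩ := hcl p hp hpr hps
  obtain ⟨hqa, hqb, hqc⟩ := hcl q hqq hqr hqs
  have hvne : ∀ u ∈ S, v ≠ u := fun u hu => not_mem_ne hv hu
  by_cases ht : ∃ t ∈ S, t ≠ r ∧ t ≠ s ∧ t ≠ p ∧ t ≠ q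
  · left
    obtain ⟨t, htS, ht1, ht2, ht3, ht4⟩ := ht
    obtain ⟨hta, htb, _⟩ := hcl t htS ht1 ht2
    -- cycle v p r t s q
    exact hasC6 hvp hpa hta.symm htb hqb.symm hvq.symm
      (hvne r hr) (hvne t htS) (hvne s hs)
      (fun h => ht3 h.symm) hps hpq hrs (fun h => hqr h.symm) (fun h => ht4 h)
  · right
    push_neg at ht
    refine ⟨p, q, r, s, mem_insert_of_mem hp, mem_insert_of_mem hqq,
      mem_insert_of_mem hr, mem_insert_of_mem hs,
      hpq, hpr, hps, hqr, hqs, hrs,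
      hpc q hqq hqr hqs hpq.symm, hars, hpa.symm, hqa.symm, hpb.symm, hqb.symm, ?_,
      ⟨v, mem_insert_self v S, hvne p hp, hvne q hqq, hvne r hr, hvne s hs⟩⟩
    intro w hw hwp hwq hwr hws
    rcases mem_insert.1 hw with h | h
    · subst h
      refine ⟨hvp, hvq, ?_⟩
      intro u hu u1 u2 u3 hadj
      rcases mem_insert.1 hu with h' | h'
      · exact u3 h'
      · rcases honly u h' hadj with h'' | h'' <;> [exact u1 h''; exact u2 h'']
    · exact absurd (ht w h hwr hws hwp) hwq

/-- Full F1 step. -/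
lemma stepF1 (hv : v ∉ S) (hF : IsF1 G S) {α β : V}
    (hα : α ∈ S) (hβ : β ∈ S) (hαβ : α ≠ β)
    (hvα : G.Adj v α) (hvβ : G.Adj v β)
    (honly : ∀ u ∈ S, G.Adj v u → u = α ∨ u = β) :
    Fam G (insert v S) := by
  obtain ⟨r, s, hr, hs, hrs, hars, hcl⟩ := hF
  have hclswap : ∀ w ∈ S, w ≠ s → w ≠ r →
      (G.Adj w s ∧ G.Adj w r ∧ ∀ u ∈ S, u ≠ s → u ≠ r → u ≠ w → ¬ G.Adj w u) := by
    intro w hw h1 h2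
    obtain ⟨o1, o2, o3⟩ := hcl w hw h2 h1
    exact ⟨o2, o1, fun u hu u1 u2 u3 => o3 u hu u2 u1 u3⟩
  have honly' : ∀ u ∈ S, G.Adj v u → u = β ∨ u = α :=
    fun u hu h => (honly u hu h).symm
  have hcα : α = r ∨ α = s ∨ (α ≠ r ∧ α ≠ s) := by tauto
  have hcβ : β = r ∨ β = s ∨ (β ≠ r ∧ β ≠ s) := by tauto
  rcases hcα with h1 | h1 | h1 <;> rcases hcβ with h2 | h2 | h2
  · exact absurd (h1.trans h2.symm) hαβ
  · subst h1; subst h2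
    exact Or.inr (Or.inl (stepF1_ss hv hr hs hrs hars hcl hvα hvβ honly))
  · subst h1
    rcases stepF1_sp hv hr hs hrs hars hcl hβ h2.1 h2.2 hvα hvβ honly with h | h
    · exact Or.inr (Or.inr (Or.inl h))
    · exact Or.inr (Or.inl h)
  · subst h1; subst h2
    exact Or.inr (Or.inl (stepF1_ss hv hr hs hrs hars hcl hvβ hvα honly'))
  · exact absurd (h1.trans h2.symm) hαβ
  · subst h1
    rcases stepF1_sp hv hs hr hrs.symm hars.symm hclswap hβ h2.2 h2.1 hvα hvβ honly with h | h
    · exact Or.inr (Or.inr (Or.inl h))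
    · exact Or.inr (Or.inl h)
  · subst h2
    rcases stepF1_sp hv hr hs hrs hars hcl hα h1.1 h1.2 hvβ hvα honly' with h | h
    · exact Or.inr (Or.inr (Or.inl h))
    · exact Or.inr (Or.inl h)
  · subst h2
    rcases stepF1_sp hv hs hr hrs.symm hars.symm hclswap hα h1.2 h1.1 hvβ hvα honly' with h | h
    · exact Or.inr (Or.inr (Or.inl h))
    · exact Or.inr (Or.inl h)
  · rcases stepF1_pp hv hr hs hrs hars hcl hα h1.1 h1.2 hβ h2.1 h2.2 hαβ hvα hvβ honly with h | h
    · exact Or.inl h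
    · exact Or.inr (Or.inr (Or.inr h))

end Step

/-- F23 step: constructive case, v adjacent to r and s (new page). -/
lemma stepF23_rs {r s p : V} (hv : v ∉ S) (hF : IsF23 G S)
    (hr : r ∈ S) (hs : s ∈ S) (hp : p ∈ S)
    (hrs : r ≠ s) (hrp : r ≠ p) (hsp : s ≠ p)
    (hars : G.Adj r s) (harp : G.Adj r p) (hasp : G.Adj s p)
    (hcl : ∀ w ∈ S, w ≠ r → w ≠ s → w ≠ p →
      ((G.Adj w r ∧ G.Adj w s ∧ ¬ G.Adj w p) ∨ (G.Adj w r ∧ G.Adj w p ∧ ¬ G.Adj w s)) ∧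
      (∀ u ∈ S, u ≠ r → u ≠ s → u ≠ p → u ≠ w → ¬ G.Adj w u))
    (hex : (∃ q ∈ S, q ≠ r ∧ q ≠ s ∧ q ≠ p ∧ G.Adj q s) ∧
           (∃ w ∈ S, w ≠ r ∧ w ≠ s ∧ w ≠ p ∧ G.Adj w p))
    (hvr : G.Adj v r) (hvs : G.Adj v s)
    (honly : ∀ u ∈ S, G.Adj v u → u = r ∨ u = s) :
    IsF23 G (insert v S) := by
  obtain ⟨⟨q, hqS, hq1, hq2, hq3, hqs⟩, ⟨w, hwS, hw1, hw2, hw3, hwp⟩⟩ := hex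
  refine ⟨r, s, p, mem_insert_of_mem hr, mem_insert_of_mem hs, mem_insert_of_mem hp,
    hrs, hrp, hsp, hars, harp, hasp, ?_,
    ⟨q, mem_insert_of_mem hqS, hq1, hq2, hq3, hqs⟩,
    ⟨w, mem_insert_of_mem hwS, hw1, hw2, hw3, hwp⟩⟩
  intro z hz z1 z2 z3
  rcases mem_insert.1 hz with h | h
  · subst h
    constructor
    · left
      refine ⟨hvr, hvs, fun hadj => ?_⟩
      rcases honly p hp hadj with h' | h' <;> [exact hrp h'.symm; exact hsp h'.symm]
    · intro u hu u1 u2 u3 u4 hadj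
      rcases mem_insert.1 hu with h' | h'
      · exact u4 h'
      · rcases honly u h' hadj with h' | h' <;> [exact u1 h'; exact u2 h']
  · obtain ⟨o1, o2⟩ := hcl z h z1 z2 z3
    refine ⟨o1, ?_⟩
    intro u hu u1 u2 u3 u4 hadj
    rcases mem_insert.1 hu with h' | h'
    · subst h'
      rcases honly z h hadj.symm with h' | h' <;> [exact z1 h'; exact z2 h']
    · exact o2 u h' u1 u2 u3 u4 hadj

/-- F23 step: constructive case, v adjacent to r and p (new subpage). -/
lemma stepF23_rp {r s p : V} (hv : v ∉ S) (hF : IsF23 G S)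
    (hr : r ∈ S) (hs : s ∈ S) (hp : p ∈ S)
    (hrs : r ≠ s) (hrp : r ≠ p) (hsp : s ≠ p)
    (hars : G.Adj r s) (harp : G.Adj r p) (hasp : G.Adj s p)
    (hcl : ∀ w ∈ S, w ≠ r → w ≠ s → w ≠ p →
      ((G.Adj w r ∧ G.Adj w s ∧ ¬ G.Adj w p) ∨ (G.Adj w r ∧ G.Adj w p ∧ ¬ G.Adj w s)) ∧
      (∀ u ∈ S, u ≠ r → u ≠ s → u ≠ p → u ≠ w → ¬ G.Adj w u))
    (hex : (∃ q ∈ S, q ≠ r ∧ q ≠ s ∧ q ≠ p ∧ G.Adj q s) ∧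
           (∃ w ∈ S, w ≠ r ∧ w ≠ s ∧ w ≠ p ∧ G.Adj w p))
    (hvr : G.Adj v r) (hvp : G.Adj v p)
    (honly : ∀ u ∈ S, G.Adj v u → u = r ∨ u = p) :
    IsF23 G (insert v S) := by
  obtain ⟨⟨q, hqS, hq1, hq2, hq3, hqs⟩, ⟨w, hwS, hw1, hw2, hw3, hwp⟩⟩ := hex
  refine ⟨r, s, p, mem_insert_of_mem hr, mem_insert_of_mem hs, mem_insert_of_mem hp,
    hrs, hrp, hsp, hars, harp, hasp, ?_,
    ⟨q, mem_insert_of_mem hqS, hq1, hq2, hq3, hqs⟩,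
    ⟨w, mem_insert_of_mem hwS, hw1, hw2, hw3, hwp⟩⟩
  intro z hz z1 z2 z3
  rcases mem_insert.1 hz with h | h
  · subst h
    constructor
    · right
      refine ⟨hvr, hvp, fun hadj => ?_⟩
      rcases honly s hs hadj with h' | h' <;> [exact hrs h'.symm; exact hsp h']
    · intro u hu u1 u2 u3 u4 hadj
      rcases mem_insert.1 hu with h' | h'
      · exact u4 h'
      · rcases honly u h' hadj with h' | h' <;> [exact u1 h'; exact u3 h']
  · obtain ⟨o1, o2⟩ := hcl z h z1 z2 z3
    refine ⟨o1, ?_⟩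
    intro u hu u1 u2 u3 u4 hadj
    rcases mem_insert.1 hu with h' | h'
    · subst h'
      rcases honly z h hadj.symm with h' | h' <;> [exact z1 h'; exact z3 h']
    · exact o2 u h' u1 u2 u3 u4 hadj

set_option maxHeartbeats 1000000 in
/-- Full F23 step. -/
lemma stepF23 (hv : v ∉ S) (hF : IsF23 G S) {α β : V}
    (hα : α ∈ S) (hβ : β ∈ S) (hαβ : α ≠ β)
    (hvα : G.Adj v α) (hvβ : G.Adj v β)
    (honly : ∀ u ∈ S, G.Adj v u → u = α ∨ u = β) :
    Fam G (insert v S) := by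
  obtain ⟨r, s, p, hr, hs, hp, hrs, hrp, hsp, hars, harp, hasp, hcl, hexq, hexw⟩ := hF
  obtain ⟨q, hqS, hq1, hq2, hq3, hqs⟩ := hexq
  obtain ⟨w, hwS, hw1, hw2, hw3, hwp⟩ := hexw
  have hqT : G.Adj q r ∧ G.Adj q s ∧ ¬ G.Adj q p := by
    rcases (hcl q hqS hq1 hq2 hq3).1 with h | h
    · exact h
    · exact absurd hqs h.2.2
  have hwT : G.Adj w r ∧ G.Adj w p ∧ ¬ G.Adj w s := by
    rcases (hcl w hwS hw1 hw2 hw3).1 with h | h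
    · exact absurd hwp h.2.2
    · exact h
  have hqw : q ≠ w := fun h => hwT.2.2 (h ▸ hqs)
  have hvne : ∀ u ∈ S, v ≠ u := fun u hu => not_mem_ne hv hu
  -- C6 patterns
  have csp : G.Adj v s → G.Adj v p → HasCycleOfLength G 6 := by
    -- v-s-q-r-w-p-v
    intro h1 h2
    exact hasC6 h1 hqs.symm hqT.1 hwT.1.symm hwp h2.symm
      (hvne q hqS) (hvne r hr) (hvne w hwS) hrs.symm hw2.symm hsp
      hqw hq3 hrp
  have crt : ∀ t ∈ S, t ≠ r → t ≠ s → t ≠ p → G.Adj t r → G.Adj t s → ¬ G.Adj t p →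
      G.Adj v r → G.Adj v t → HasCycleOfLength G 6 := by
    -- v-t-s-p-w-r-v
    intro t htS ht1 ht2 ht3 hta htb htc h1 h2
    have htw : t ≠ w := fun h => hwT.2.2 (h ▸ htb)
    exact hasC6 h2 htb hasp hwp.symm hwT.1 h1.symm
      (hvne s hs) (hvne p hp) (hvne w hwS) ht3 htw ht1
      hw2.symm hrs.symm hrp.symm
  have cst : ∀ t ∈ S, t ≠ r → t ≠ s → t ≠ p → G.Adj t r → G.Adj t s → ¬ G.Adj t p →
      G.Adj v s → G.Adj v t → HasCycleOfLength G 6 := by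
    -- v-t-r-w-p-s-v
    intro t htS ht1 ht2 ht3 hta htb htc h1 h2
    have htw : t ≠ w := fun h => hwT.2.2 (h ▸ htb)
    exact hasC6 h2 hta hwT.1.symm hwp hasp.symm h1.symm
      (hvne r hr) (hvne w hwS) (hvne p hp) htw ht3 ht2
      hrp hrs hw2
  have cpt : ∀ t ∈ S, t ≠ r → t ≠ s → t ≠ p → G.Adj t r → G.Adj t s → ¬ G.Adj t p →
      G.Adj v p → G.Adj v t → HasCycleOfLength G 6 := by
    -- v-p-w-r-s-t-v
    intro t htS ht1 ht2 ht3 hta htb htc h1 h2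
    have htw : t ≠ w := fun h => hwT.2.2 (h ▸ htb)
    exact hasC6 h1 hwp.symm hwT.1 hars htb.symm h2.symm
      (hvne w hwS) (hvne r hr) (hvne s hs) hrp.symm hsp.symm ht3.symm
      hw2 htw.symm ht1.symm
  have cru : ∀ u ∈ S, u ≠ r → u ≠ s → u ≠ p → G.Adj u r → G.Adj u p → ¬ G.Adj u s →
      G.Adj v r → G.Adj v u → HasCycleOfLength G 6 := by
    -- v-u-p-s-q-r-v
    intro u huS hu1 hu2 hu3 hua hub huc h1 h2
    have huq : u ≠ q := fun h => huc (h ▸ hqs)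
    exact hasC6 h2 hub hasp.symm hqs.symm hqT.1 h1.symm
      (hvne p hp) (hvne s hs) (hvne q hqS) hu2 huq hu1
      hq3.symm hrp.symm hrs.symm
  have csu : ∀ u ∈ S, u ≠ r → u ≠ s → u ≠ p → G.Adj u r → G.Adj u p → ¬ G.Adj u s →
      G.Adj v s → G.Adj v u → HasCycleOfLength G 6 := by
    -- v-u-p-r-q-s-v
    intro u huS hu1 hu2 hu3 hua hub huc h1 h2
    have huq : u ≠ q := fun h => huc (h ▸ hqs)
    exact hasC6 h2 hub harp.symm hqT.1.symm hqs h1.symm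
      (hvne p hp) (hvne r hr) (hvne q hqS) hu1 huq hu2
      hq3.symm hsp.symm hrs
  have cpu : ∀ u ∈ S, u ≠ r → u ≠ s → u ≠ p → G.Adj u r → G.Adj u p → ¬ G.Adj u s →
      G.Adj v p → G.Adj v u → HasCycleOfLength G 6 := by
    -- v-u-r-q-s-p-v
    intro u huS hu1 hu2 hu3 hua hub huc h1 h2
    have huq : u ≠ q := fun h => huc (h ▸ hqs)
    exact hasC6 h2 hua hqT.1.symm hqs hasp h1.symm
      (hvne r hr) (hvne q hqS) (hvne s hs) huq hu2 hu3
      hrs hrp hq3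
  have ctt : ∀ t ∈ S, t ≠ r → t ≠ s → t ≠ p → G.Adj t r → G.Adj t s → ¬ G.Adj t p →
      ∀ t' ∈ S, t' ≠ r → t' ≠ s → t' ≠ p → G.Adj t' r → G.Adj t' s → ¬ G.Adj t' p →
      t ≠ t' → G.Adj v t → G.Adj v t' → HasCycleOfLength G 6 := by
    -- v-t-r-p-s-t'-v
    intro t htS ht1 ht2 ht3 hta htb htc t' htS' ht1' ht2' ht3' hta' htb' htc' htt h1 h2
    exact hasC6 h1 hta harp hasp.symm htb'.symm h2.symm
      (hvne r hr) (hvne p hp) (hvne s hs) ht3 ht2 htt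
      hrs ht1'.symm ht3'.symm
  have ctu : ∀ t ∈ S, t ≠ r → t ≠ s → t ≠ p → G.Adj t r → G.Adj t s → ¬ G.Adj t p →
      ∀ u ∈ S, u ≠ r → u ≠ s → u ≠ p → G.Adj u r → G.Adj u p → ¬ G.Adj u s →
      G.Adj v t → G.Adj v u → HasCycleOfLength G 6 := by
    -- v-t-r-s-p-u-v
    intro t htS ht1 ht2 ht3 hta htb htc u huS hu1 hu2 hu3 hua hub huc h1 h2
    have htu : t ≠ u := fun h => huc (h ▸ htb)
    exact hasC6 h1 hta hars hasp hub.symm h2.symm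
      (hvne r hr) (hvne s hs) (hvne p hp) ht2 ht3 htu
      hrp hu1.symm hu2.symm
  have cuu : ∀ u ∈ S, u ≠ r → u ≠ s → u ≠ p → G.Adj u r → G.Adj u p → ¬ G.Adj u s →
      ∀ u' ∈ S, u' ≠ r → u' ≠ s → u' ≠ p → G.Adj u' r → G.Adj u' p → ¬ G.Adj u' s →
      u ≠ u' → G.Adj v u → G.Adj v u' → HasCycleOfLength G 6 := by
    -- v-u-r-s-p-u'-v
    intro u huS hu1 hu2 hu3 hua hub huc u' huS' hu1' hu2' hu3' hua' hub' huc' huu h1 h2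
    exact hasC6 h1 hua hars hasp hub'.symm h2.symm
      (hvne r hr) (hvne s hs) (hvne p hp) hu2 hu3 huu
      hrp hu1'.symm hu2'.symm
  have honly2 : ∀ u ∈ S, G.Adj v u → u = β ∨ u = α := fun u hu h => (honly u hu h).symm
  have hex : (∃ q ∈ S, q ≠ r ∧ q ≠ s ∧ q ≠ p ∧ G.Adj q s) ∧
      (∃ w ∈ S, w ≠ r ∧ w ≠ s ∧ w ≠ p ∧ G.Adj w p) :=
    ⟨⟨q, hqS, hq1, hq2, hq3, hqs⟩, ⟨w, hwS, hw1, hw2, hw3, hwp⟩⟩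
  have hF' : IsF23 G S := ⟨r, s, p, hr, hs, hp, hrs, hrp, hsp, hars, harp, hasp, hcl, hex.1, hex.2⟩
  have classify : ∀ γ ∈ S, γ = r ∨ γ = s ∨ γ = p ∨
      (γ ≠ r ∧ γ ≠ s ∧ γ ≠ p ∧ G.Adj γ r ∧ G.Adj γ s ∧ ¬ G.Adj γ p) ∨
      (γ ≠ r ∧ γ ≠ s ∧ γ ≠ p ∧ G.Adj γ r ∧ G.Adj γ p ∧ ¬ G.Adj γ s) := by
    intro γ hγ
    by_cases k1 : γ = r
    · exact Or.inl k1
    by_cases k2 : γ = s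
    · exact Or.inr (Or.inl k2)
    by_cases k3 : γ = p
    · exact Or.inr (Or.inr (Or.inl k3))
    rcases (hcl γ hγ k1 k2 k3).1 with h | h
    · exact Or.inr (Or.inr (Or.inr (Or.inl ⟨k1, k2, k3, h.1, h.2.1, h.2.2⟩)))
    · exact Or.inr (Or.inr (Or.inr (Or.inr ⟨k1, k2, k3, h.1, h.2.1, h.2.2⟩)))
  rcases classify α hα with hA | hA | hA | hA | hA
  · subst hA
    rcases classify β hβ with hB | hB | hB | hB | hB
    · exact absurd hB.symm hαβ
    · subst hB
      exact Or.inr (Or.inr (Or.inl (stepF23_rs hv hF' hr hs hp hrs hrp hsp hars harp hasp hcl hex hvα hvβ honly)))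
    · subst hB
      exact Or.inr (Or.inr (Or.inl (stepF23_rp hv hF' hr hs hp hrs hrp hsp hars harp hasp hcl hex hvα hvβ honly)))
    · exact Or.inl (crt β hβ hB.1 hB.2.1 hB.2.2.1 hB.2.2.2.1 hB.2.2.2.2.1 hB.2.2.2.2.2 hvα hvβ)
    · exact Or.inl (cru β hβ hB.1 hB.2.1 hB.2.2.1 hB.2.2.2.1 hB.2.2.2.2.1 hB.2.2.2.2.2 hvα hvβ)
  · subst hA
    rcases classify β hβ with hB | hB | hB | hB | hB
    · subst hB
      exact Or.inr (Or.inr (Or.inl (stepF23_rs hv hF' hr hs hp hrs hrp hsp hars harp hasp hcl hex hvβ hvα honly2)))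
    · exact absurd hB.symm hαβ
    · subst hB
      exact Or.inl (csp hvα hvβ)
    · exact Or.inl (cst β hβ hB.1 hB.2.1 hB.2.2.1 hB.2.2.2.1 hB.2.2.2.2.1 hB.2.2.2.2.2 hvα hvβ)
    · exact Or.inl (csu β hβ hB.1 hB.2.1 hB.2.2.1 hB.2.2.2.1 hB.2.2.2.2.1 hB.2.2.2.2.2 hvα hvβ)
  · subst hA
    rcases classify β hβ with hB | hB | hB | hB | hB
    · subst hB
      exact Or.inr (Or.inr (Or.inl (stepF23_rp hv hF' hr hs hp hrs hrp hsp hars harp hasp hcl hex hvβ hvα honly2)))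
    · subst hB
      exact Or.inl (csp hvβ hvα)
    · exact absurd hB.symm hαβ
    · exact Or.inl (cpt β hβ hB.1 hB.2.1 hB.2.2.1 hB.2.2.2.1 hB.2.2.2.2.1 hB.2.2.2.2.2 hvα hvβ)
    · exact Or.inl (cpu β hβ hB.1 hB.2.1 hB.2.2.1 hB.2.2.2.1 hB.2.2.2.2.1 hB.2.2.2.2.2 hvα hvβ)
  · obtain ⟨hA1, hA2, hA3, hA4, hA5, hA6⟩ := hA
    rcases classify β hβ with hB | hB | hB | hB | hB
    · subst hB
      exact Or.inl (crt α hα hA1 hA2 hA3 hA4 hA5 hA6 hvβ hvα)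
    · subst hB
      exact Or.inl (cst α hα hA1 hA2 hA3 hA4 hA5 hA6 hvβ hvα)
    · subst hB
      exact Or.inl (cpt α hα hA1 hA2 hA3 hA4 hA5 hA6 hvβ hvα)
    · obtain ⟨hB1, hB2, hB3, hB4, hB5, hB6⟩ := hB
      exact Or.inl (ctt α hα hA1 hA2 hA3 hA4 hA5 hA6 β hβ hB1 hB2 hB3 hB4 hB5 hB6 hαβ hvα hvβ)
    · obtain ⟨hB1, hB2, hB3, hB4, hB5, hB6⟩ := hB
      exact Or.inl (ctu α hα hA1 hA2 hA3 hA4 hA5 hA6 β hβ hB1 hB2 hB3 hB4 hB5 hB6 hvα hvβ)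
  · obtain ⟨hA1, hA2, hA3, hA4, hA5, hA6⟩ := hA
    rcases classify β hβ with hB | hB | hB | hB | hB
    · subst hB
      exact Or.inl (cru α hα hA1 hA2 hA3 hA4 hA5 hA6 hvβ hvα)
    · subst hB
      exact Or.inl (csu α hα hA1 hA2 hA3 hA4 hA5 hA6 hvβ hvα)
    · subst hB
      exact Or.inl (cpu α hα hA1 hA2 hA3 hA4 hA5 hA6 hvβ hvα)
    · obtain ⟨hB1, hB2, hB3, hB4, hB5, hB6⟩ := hB
      exact Or.inl (ctu β hβ hB1 hB2 hB3 hB4 hB5 hB6 α hα hA1 hA2 hA3 hA4 hA5 hA6 hvβ hvα)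
    · obtain ⟨hB1, hB2, hB3, hB4, hB5, hB6⟩ := hB
      exact Or.inl (cuu α hα hA1 hA2 hA3 hA4 hA5 hA6 β hβ hB1 hB2 hB3 hB4 hB5 hB6 hαβ hvα hvβ)

set_option maxHeartbeats 1000000 in
/-- Full F4 step. -/
lemma stepF4 (hv : v ∉ S) (hF : IsF4 G S) {α β : V}
    (hα : α ∈ S) (hβ : β ∈ S) (hαβ : α ≠ β)
    (hvα : G.Adj v α) (hvβ : G.Adj v β)
    (honly : ∀ u ∈ S, G.Adj v u → u = α ∨ u = β) :
    Fam G (insert v S) := by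
  obtain ⟨a, b, c₁, c₂, ha, hb, hc1, hc2, hab, hac1, hac2, hbc1, hbc2, hc12,
    hnab, h12, h1a, h1b, h2a, h2b, hcl, ⟨c₃, hc3, h3a, h3b, h31, h32⟩⟩ := hF
  obtain ⟨h3A, h3B, h3cl⟩ := hcl c₃ hc3 h3a h3b h31 h32
  have hvne : ∀ u ∈ S, v ≠ u := fun u hu => not_mem_ne hv hu
  -- C6 patterns
  have cac1 : G.Adj v a → G.Adj v c₁ → HasCycleOfLength G 6 := by
    -- v-c1-c2-b-c3-a-v
    intro h1 h2
    exact hasC6 h2 h12 h2b h3B.symm h3A h1.symm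
      (hvne c₂ hc2) (hvne b hb) (hvne c₃ hc3) hbc1.symm (fun h => h31 h.symm) hac1.symm
      (fun h => h32 h.symm) hac2.symm hab.symm
  have cac2 : G.Adj v a → G.Adj v c₂ → HasCycleOfLength G 6 := by
    -- v-c2-c1-b-c3-a-v
    intro h1 h2
    exact hasC6 h2 h12.symm h1b h3B.symm h3A h1.symm
      (hvne c₁ hc1) (hvne b hb) (hvne c₃ hc3) hbc2.symm (fun h => h32 h.symm) hac2.symm
      (fun h => h31 h.symm) hac1.symm hab.symm
  have cbc1 : G.Adj v b → G.Adj v c₁ → HasCycleOfLength G 6 := by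
    -- v-c1-c2-a-c3-b-v
    intro h1 h2
    exact hasC6 h2 h12 h2a h3A.symm h3B h1.symm
      (hvne c₂ hc2) (hvne a ha) (hvne c₃ hc3) hac1.symm.symm.symm (fun h => h31 h.symm) hbc1.symm
      (fun h => h32 h.symm) hbc2.symm hab
  have cbc2 : G.Adj v b → G.Adj v c₂ → HasCycleOfLength G 6 := by
    -- v-c2-c1-a-c3-b-v
    intro h1 h2
    exact hasC6 h2 h12.symm h1a h3A.symm h3B h1.symm
      (hvne c₁ hc1) (hvne a ha) (hvne c₃ hc3) hac2.symm.symm.symm (fun h => h32 h.symm) hbc2.symm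
      (fun h => h31 h.symm) hbc1.symm hab
  have cat : ∀ t ∈ S, t ≠ a → t ≠ b → t ≠ c₁ → t ≠ c₂ → G.Adj t a → G.Adj t b →
      G.Adj v a → G.Adj v t → HasCycleOfLength G 6 := by
    -- v-t-b-c1-c2-a-v
    intro t htS ht1 ht2 ht3 ht4 hta htb h1 h2
    exact hasC6 h2 htb h1b.symm h12 h2a h1.symm
      (hvne b hb) (hvne c₁ hc1) (hvne c₂ hc2) ht3 ht4 ht1
      hbc2 hab.symm hac1.symm
  have cbt : ∀ t ∈ S, t ≠ a → t ≠ b → t ≠ c₁ → t ≠ c₂ → G.Adj t a → G.Adj t b →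
      G.Adj v b → G.Adj v t → HasCycleOfLength G 6 := by
    -- v-t-a-c1-c2-b-v
    intro t htS ht1 ht2 ht3 ht4 hta htb h1 h2
    exact hasC6 h2 hta h1a.symm h12 h2b h1.symm
      (hvne a ha) (hvne c₁ hc1) (hvne c₂ hc2) ht3 ht4 ht2
      hac2 hab hbc1.symm
  have cc12 : G.Adj v c₁ → G.Adj v c₂ → HasCycleOfLength G 6 := by
    -- v-c1-a-c3-b-c2-v
    intro h1 h2
    exact hasC6 h1 h1a h3A.symm h3B h2b.symm h2.symm
      (hvne a ha) (hvne c₃ hc3) (hvne b hb) h31.symm hbc1.symm hc12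
      hab hac2 h32
  have cc1t : ∀ t ∈ S, t ≠ a → t ≠ b → t ≠ c₁ → t ≠ c₂ → G.Adj t a → G.Adj t b →
      G.Adj v c₁ → G.Adj v t → HasCycleOfLength G 6 := by
    -- v-c1-a-c2-b-t-v
    intro t htS ht1 ht2 ht3 ht4 hta htb h1 h2
    exact hasC6 h1 h1a h2a.symm h2b htb.symm h2.symm
      (hvne a ha) (hvne c₂ hc2) (hvne b hb) hc12 hbc1.symm ht3.symm
      hab ht1.symm ht4.symm
  have cc2t : ∀ t ∈ S, t ≠ a → t ≠ b → t ≠ c₁ → t ≠ c₂ → G.Adj t a → G.Adj t b →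
      G.Adj v c₂ → G.Adj v t → HasCycleOfLength G 6 := by
    -- v-c2-a-c1-b-t-v
    intro t htS ht1 ht2 ht3 ht4 hta htb h1 h2
    exact hasC6 h1 h2a h1a.symm h1b htb.symm h2.symm
      (hvne a ha) (hvne c₁ hc1) (hvne b hb) hc12.symm hbc2.symm ht4.symm
      hab ht1.symm ht3.symm
  have ctt : ∀ t ∈ S, t ≠ a → t ≠ b → t ≠ c₁ → t ≠ c₂ → G.Adj t a → G.Adj t b →
      ∀ t' ∈ S, t' ≠ a → t' ≠ b → t' ≠ c₁ → t' ≠ c₂ → G.Adj t' a → G.Adj t' b →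
      t ≠ t' → G.Adj v t → G.Adj v t' → HasCycleOfLength G 6 := by
    -- v-t-a-c1-b-t'-v
    intro t htS ht1 ht2 ht3 ht4 hta htb t' htS' ht1' ht2' ht3' ht4' hta' htb' htt h1 h2
    exact hasC6 h1 hta h1a.symm h1b htb'.symm h2.symm
      (hvne a ha) (hvne c₁ hc1) (hvne b hb) ht3 ht2 htt
      hab ht1'.symm ht3'.symm
  have cab : G.Adj v a → G.Adj v b → (∀ u ∈ S, G.Adj v u → u = a ∨ u = b) →
      IsF4 G (insert v S) := by
    intro h1 h2 hon
    refine ⟨a, b, c₁, c₂, mem_insert_of_mem ha, mem_insert_of_mem hb,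
      mem_insert_of_mem hc1, mem_insert_of_mem hc2,
      hab, hac1, hac2, hbc1, hbc2, hc12,
      hnab, h12, h1a, h1b, h2a, h2b, ?_,
      ⟨c₃, mem_insert_of_mem hc3, h3a, h3b, h31, h32⟩⟩
    intro z hz z1 z2 z3 z4
    rcases mem_insert.1 hz with h | h
    · subst h
      refine ⟨h1, h2, ?_⟩
      intro u hu u1 u2 u3 hadj
      rcases mem_insert.1 hu with h' | h'
      · exact u3 h'
      · rcases hon u h' hadj with h' | h' <;> [exact u1 h'; exact u2 h']
    · obtain ⟨o1, o2, o3⟩ := hcl z h z1 z2 z3 z4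
      refine ⟨o1, o2, ?_⟩
      intro u hu u1 u2 u3 hadj
      rcases mem_insert.1 hu with h' | h'
      · subst h'
        rcases hon z h hadj.symm with h' | h' <;> [exact z1 h'; exact z2 h']
      · exact o3 u h' u1 u2 u3 hadj
  have classify : ∀ γ ∈ S, γ = a ∨ γ = b ∨ γ = c₁ ∨ γ = c₂ ∨
      (γ ≠ a ∧ γ ≠ b ∧ γ ≠ c₁ ∧ γ ≠ c₂ ∧ G.Adj γ a ∧ G.Adj γ b) := by
    intro γ hγ
    by_cases k1 : γ = a
    · exact Or.inl k1
    by_cases k2 : γ = b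
    · exact Or.inr (Or.inl k2)
    by_cases k3 : γ = c₁
    · exact Or.inr (Or.inr (Or.inl k3))
    by_cases k4 : γ = c₂
    · exact Or.inr (Or.inr (Or.inr (Or.inl k4)))
    obtain ⟨o1, o2, _⟩ := hcl γ hγ k1 k2 k3 k4
    exact Or.inr (Or.inr (Or.inr (Or.inr ⟨k1, k2, k3, k4, o1, o2⟩)))
  have honly' : ∀ u ∈ S, G.Adj v u → u = β ∨ u = α := fun u hu h => (honly u hu h).symm
  rcases classify α hα with hA | hA | hA | hA | hA
  · subst hA
    rcases classify β hβ with hB | hB | hB | hB | hB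
    · exact absurd hB.symm hαβ
    · subst hB
      exact Or.inr (Or.inr (Or.inr (cab hvα hvβ honly)))
    · subst hB
      exact Or.inl (cac1 hvα hvβ)
    · subst hB
      exact Or.inl (cac2 hvα hvβ)
    · exact Or.inl (cat β hβ hB.1 hB.2.1 hB.2.2.1 hB.2.2.2.1 hB.2.2.2.2.1 hB.2.2.2.2.2 hvα hvβ)
  · subst hA
    rcases classify β hβ with hB | hB | hB | hB | hB
    · subst hB
      exact Or.inr (Or.inr (Or.inr (cab hvβ hvα honly')))
    · exact absurd hB.symm hαβ
    · subst hB
      exact Or.inl (cbc1 hvα hvβ)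
    · subst hB
      exact Or.inl (cbc2 hvα hvβ)
    · exact Or.inl (cbt β hβ hB.1 hB.2.1 hB.2.2.1 hB.2.2.2.1 hB.2.2.2.2.1 hB.2.2.2.2.2 hvα hvβ)
  · subst hA
    rcases classify β hβ with hB | hB | hB | hB | hB
    · subst hB
      exact Or.inl (cac1 hvβ hvα)
    · subst hB
      exact Or.inl (cbc1 hvβ hvα)
    · exact absurd hB.symm hαβ
    · subst hB
      exact Or.inl (cc12 hvα hvβ)
    · exact Or.inl (cc1t β hβ hB.1 hB.2.1 hB.2.2.1 hB.2.2.2.1 hB.2.2.2.2.1 hB.2.2.2.2.2 hvα hvβ)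
  · subst hA
    rcases classify β hβ with hB | hB | hB | hB | hB
    · subst hB
      exact Or.inl (cac2 hvβ hvα)
    · subst hB
      exact Or.inl (cbc2 hvβ hvα)
    · subst hB
      exact Or.inl (cc12 hvβ hvα)
    · exact absurd hB.symm hαβ
    · exact Or.inl (cc2t β hβ hB.1 hB.2.1 hB.2.2.1 hB.2.2.2.1 hB.2.2.2.2.1 hB.2.2.2.2.2 hvα hvβ)
  · obtain ⟨hA1, hA2, hA3, hA4, hA5, hA6⟩ := hA
    rcases classify β hβ with hB | hB | hB | hB | hB
    · subst hB
      exact Or.inl (cat α hα hA1 hA2 hA3 hA4 hA5 hA6 hvβ hvα)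
    · subst hB
      exact Or.inl (cbt α hα hA1 hA2 hA3 hA4 hA5 hA6 hvβ hvα)
    · subst hB
      exact Or.inl (cc1t α hα hA1 hA2 hA3 hA4 hA5 hA6 hvβ hvα)
    · subst hB
      exact Or.inl (cc2t α hα hA1 hA2 hA3 hA4 hA5 hA6 hvβ hvα)
    · obtain ⟨hB1, hB2, hB3, hB4, hB5, hB6⟩ := hB
      exact Or.inl (ctt α hα hA1 hA2 hA3 hA4 hA5 hA6 β hβ hB1 hB2 hB3 hB4 hB5 hB6 hαβ hvα hvβ)

lemma main_classification (hG : DegreeThreeCritical G) :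
    ∀ k, ∀ S : Finset V, S.card ≤ k → S ≠ univ → 2 ≤ S.card →
      dp G S + 6 = 4 * S.card → Fam G S := by
  intro k
  induction k with
  | zero => intro S h1 _ h3 _; omega
  | succ k ih =>
    intro S h1 hu h3 htight
    by_cases h2 : S.card = 2
    · -- base case: S is an edge
      obtain ⟨a, b, hab, hS⟩ := Finset.card_eq_two.1 h2
      subst hS
      have hadj : G.Adj a b := by
        by_contra hn
        have e1 : dIn G {a, b} a = 0 := by
          unfold dIn
          rw [Finset.card_eq_zero]
          ext u
          simp only [mem_filter, mem_insert, mem_singleton, notMem_empty, iff_false, not_and]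
          rintro (rfl | rfl)
          · exact fun h => G.irrefl h
          · exact fun h => hn h
        have e2 : dIn G {a, b} b = 0 := by
          unfold dIn
          rw [Finset.card_eq_zero]
          ext u
          simp only [mem_filter, mem_insert, mem_singleton, notMem_empty, iff_false, not_and]
          rintro (rfl | rfl)
          · exact fun h => hn (G.adj_symm h)
          · exact fun h => G.irrefl h
        have e3 : dp G {a, b} = dIn G {a, b} a + dIn G {a, b} b := Finset.sum_pair hab
        rw [e1, e2] at e3
        omega
      refine Or.inr (Or.inl ⟨a, b, mem_insert_self a {b},
        mem_insert_of_mem (mem_singleton_self b), hab, hadj, ?_⟩)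
      intro w hw w1 w2
      rcases mem_insert.1 hw with h | h
      · exact absurd h w1
      · exact absurd (mem_singleton.1 h) w2
    · -- inductive step
      have hpos : 0 < S.card := by omega
      obtain ⟨v, hvS, hd⟩ := crit hG hu (Finset.card_pos.1 hpos)
      have hvS' : v ∉ S.erase v := notMem_erase v S
      have hce : (S.erase v).card = S.card - 1 := card_erase_of_mem hvS
      have hcu : S.card ≤ Fintype.card V := by
        simpa using Finset.card_le_univ S
      have hne' : S.erase v ≠ univ := ne_univ_of_card_lt (by omega)
      have hsp := sparse hG (S.erase v).card (S.erase v) le_rfl hne' (by omega)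
      have hdpe := dp_erase (G := G) hvS
      have hdIn : dIn G S v = 2 := by omega
      have htight' : dp G (S.erase v) + 6 = 4 * (S.erase v).card := by omega
      have hfam' := ih (S.erase v) (by omega) hne' (by omega) htight'
      obtain ⟨α, β, hαβ, hfil⟩ := Finset.card_eq_two.1 hdIn
      have hα : α ∈ S ∧ G.Adj v α := by
        have : α ∈ S.filter (fun u => G.Adj v u) := by rw [hfil]; exact mem_insert_self _ _
        exact mem_filter.1 this
      have hβ : β ∈ S ∧ G.Adj v β := by
        have : β ∈ S.filter (fun u => G.Adj v u) := by
          rw [hfil]; exact mem_insert_of_mem (mem_singleton_self β)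
        exact mem_filter.1 this
      have hαe : α ∈ S.erase v := mem_erase.2 ⟨fun h => G.irrefl (h ▸ hα.2), hα.1⟩
      have hβe : β ∈ S.erase v := mem_erase.2 ⟨fun h => G.irrefl (h ▸ hβ.2), hβ.1⟩
      have honly : ∀ u ∈ S.erase v, G.Adj v u → u = α ∨ u = β := by
        intro u hu hadj
        have : u ∈ S.filter (fun w => G.Adj v w) := mem_filter.2 ⟨(mem_erase.1 hu).2, hadj⟩
        rw [hfil] at this
        simpa using this
      have hins : insert v (S.erase v) = S := insert_erase hvS
      rcases hfam' with hC | hF | hF | hF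
      · exact Or.inl hC
      · have := stepF1 hvS' hF hαe hβe hαβ hα.2 hβ.2 honly
        rwa [hins] at this
      · have := stepF23 hvS' hF hαe hβe hαβ hα.2 hβ.2 honly
        rwa [hins] at this
      · have := stepF4 hvS' hF hαe hβe hαβ hα.2 hβ.2 honly
        rwa [hins] at this

lemma adj_of_bounded {z γ δ x : V} (hdeg : 3 ≤ G.degree z)
    (hsub : ∀ u, G.Adj z u → u = γ ∨ u = δ ∨ u = x) : G.Adj z x := by
  by_contra hn
  have hsub2 : G.neighborFinset z ⊆ {γ, δ} := by
    intro u hu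
    rw [mem_neighborFinset] at hu
    rcases hsub u hu with h | h | h
    · simp [h]
    · simp [h]
    · exact absurd (h ▸ hu) hn
  have h1 := card_le_card hsub2
  have h2 : ({γ, δ} : Finset V).card ≤ 2 := card_insert_le γ {δ} |>.trans (by simp)
  rw [← SimpleGraph.card_neighborFinset_eq_degree] at hdeg
  omega

lemma endF1 (hG : DegreeThreeCritical G) (hn : 6 ≤ Fintype.card V) {x : V} (hF : IsF1 G (univ.erase x)) : HasCycleOfLength G 6 := by
  have hdeg := min_degree hG hn
  obtain ⟨r, s, hr, hs, hrs, hars, hcl⟩ := hF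
  have hrx : r ≠ x := (mem_erase.1 hr).1
  have hsx : s ≠ x := (mem_erase.1 hs).1
  -- three distinct pages
  have hPcard : 3 ≤ ((univ.erase x) \ {r, s}).card := by
    have h1 : ({r, s} : Finset V) ⊆ univ.erase x := by
      intro u hu
      rcases mem_insert.1 hu with h | h
      · exact h ▸ hr
      · exact (mem_singleton.1 h) ▸ hs
    rw [card_sdiff_of_subset h1, card_erase_of_mem (mem_univ x), card_univ]
    have : ({r, s} : Finset V).card ≤ 2 := card_insert_le r {s} |>.trans (by simp)
    have : 2 ≤ ({r, s} : Finset V).card := by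
      rw [card_insert_of_notMem (by simp [hrs]), card_singleton]
    omega
  obtain ⟨T, hTsub, hT3⟩ := Finset.exists_subset_card_eq hPcard
  obtain ⟨q₁, q₂, q₃, h12, h13, h23, hT⟩ := Finset.card_eq_three.1 hT3
  have hq : ∀ q ∈ T, q ∈ univ.erase x ∧ q ≠ r ∧ q ≠ s := by
    intro q hqT
    have := hTsub hqT
    rw [mem_sdiff] at this
    refine ⟨this.1, ?_, ?_⟩
    · intro h; exact this.2 (by simp [h])
    · intro h; exact this.2 (by simp [h])
  obtain ⟨hq1S, hq1r, hq1s⟩ := hq q₁ (hT ▸ by simp)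
  obtain ⟨hq2S, hq2r, hq2s⟩ := hq q₂ (hT ▸ by simp)
  obtain ⟨hq3S, hq3r, hq3s⟩ := hq q₃ (hT ▸ by simp)
  obtain ⟨ha1, hb1, hc1⟩ := hcl q₁ hq1S hq1r hq1s
  obtain ⟨ha2, hb2, hc2⟩ := hcl q₂ hq2S hq2r hq2s
  obtain ⟨ha3, hb3, hc3⟩ := hcl q₃ hq3S hq3r hq3s
  have hbound : ∀ q, q ∈ univ.erase x → q ≠ r → q ≠ s →
      (∀ u ∈ univ.erase x, u ≠ r → u ≠ s → u ≠ q → ¬ G.Adj q u) →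
      ∀ u, G.Adj q u → u = r ∨ u = s ∨ u = x := by
    intro q hqS hqr hqs hnon u hadj
    by_cases hur : u = r
    · exact Or.inl hur
    by_cases hus : u = s
    · exact Or.inr (Or.inl hus)
    by_cases hux : u = x
    · exact Or.inr (Or.inr hux)
    exact absurd hadj (hnon u (mem_erase.2 ⟨hux, mem_univ u⟩) hur hus
      (fun h => G.irrefl (h ▸ hadj)))
  have hx1 : G.Adj q₁ x := adj_of_bounded (hdeg q₁) (hbound q₁ hq1S hq1r hq1s hc1)
  have hx2 : G.Adj q₂ x := adj_of_bounded (hdeg q₂) (hbound q₂ hq2S hq2r hq2s hc2)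
  have hx3 : G.Adj q₃ x := adj_of_bounded (hdeg q₃) (hbound q₃ hq3S hq3r hq3s hc3)
  have hq1x : q₁ ≠ x := (mem_erase.1 hq1S).1
  have hq2x : q₂ ≠ x := (mem_erase.1 hq2S).1
  have hq3x : q₃ ≠ x := (mem_erase.1 hq3S).1
  -- cycle x q₁ r q₃ s q₂ x
  exact hasC6 hx1.symm ha1 ha3.symm hb3 hb2.symm hx2
    hrx.symm hq3x.symm hsx.symm h13 hq1s h12
    hrs hq2r.symm h23.symm

lemma endF23 (hG : DegreeThreeCritical G) (hn : 6 ≤ Fintype.card V) {x : V} (hF : IsF23 G (univ.erase x)) : HasCycleOfLength G 6 := by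
  have hdeg := min_degree hG hn
  obtain ⟨r, s, p, hr, hs, hp, hrs, hrp, hsp, hars, harp, hasp, hcl, hexq, hexw⟩ := hF
  obtain ⟨q, hqS, hq1, hq2, hq3, hqs⟩ := hexq
  obtain ⟨w, hwS, hw1, hw2, hw3, hwp⟩ := hexw
  have hqT : G.Adj q r ∧ G.Adj q s ∧ ¬ G.Adj q p := by
    rcases (hcl q hqS hq1 hq2 hq3).1 with h | h
    · exact h
    · exact absurd hqs h.2.2
  have hwT : G.Adj w r ∧ G.Adj w p ∧ ¬ G.Adj w s := by
    rcases (hcl w hwS hw1 hw2 hw3).1 with h | h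
    · exact absurd hwp h.2.2
    · exact h
  have hqw : q ≠ w := fun h => hwT.2.2 (h ▸ hqs)
  have hbound : ∀ z, z ∈ univ.erase x → z ≠ r → z ≠ s → z ≠ p → (γ₁ : V) → (γ₂ : V) →
      (∀ u ∈ univ.erase x, u ≠ r → u ≠ s → u ≠ p → u ≠ z → ¬ G.Adj z u) →
      ¬ G.Adj z γ₁ → γ₁ = r ∨ γ₁ = s ∨ γ₁ = p → True := fun _ _ _ _ _ _ _ _ _ _ => trivial
  have hboundq : ∀ u, G.Adj q u → u = r ∨ u = s ∨ u = x := by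
    intro u hadj
    by_cases hur : u = r
    · exact Or.inl hur
    by_cases hus : u = s
    · exact Or.inr (Or.inl hus)
    by_cases hux : u = x
    · exact Or.inr (Or.inr hux)
    by_cases hup : u = p
    · exact absurd (hup ▸ hadj) hqT.2.2
    exact absurd hadj ((hcl q hqS hq1 hq2 hq3).2 u (mem_erase.2 ⟨hux, mem_univ u⟩)
      hur hus hup (fun h => G.irrefl (h ▸ hadj)))
  have hboundw : ∀ u, G.Adj w u → u = r ∨ u = p ∨ u = x := by
    intro u hadj
    by_cases hur : u = r
    · exact Or.inl hur
    by_cases hup : u = p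
    · exact Or.inr (Or.inl hup)
    by_cases hux : u = x
    · exact Or.inr (Or.inr hux)
    by_cases hus : u = s
    · exact absurd (hus ▸ hadj) hwT.2.2
    exact absurd hadj ((hcl w hwS hw1 hw2 hw3).2 u (mem_erase.2 ⟨hux, mem_univ u⟩)
      hur hus hup (fun h => G.irrefl (h ▸ hadj)))
  have hxq : G.Adj q x := adj_of_bounded (hdeg q) hboundq
  have hxw : G.Adj w x := adj_of_bounded (hdeg w) hboundw
  have hpx : p ≠ x := (mem_erase.1 hp).1
  have hsx : s ≠ x := (mem_erase.1 hs).1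
  have hrx : r ≠ x := (mem_erase.1 hr).1
  -- cycle x w p s r q x
  exact hasC6 hxw.symm hwT.2.1 hasp.symm hars.symm hqT.1.symm hxq
    hpx.symm hsx.symm hrx.symm hw2 hw1 hqw.symm
    hrp.symm hq3.symm hq2.symm

lemma endF4 (hG : DegreeThreeCritical G) (hn : 6 ≤ Fintype.card V) {x : V} (hdx : 3 ≤ G.degree x) (hF : IsF4 G (univ.erase x)) :
    HasCycleOfLength G 6 := by
  have hdeg := min_degree hG hn
  obtain ⟨a, b, c₁, c₂, ha, hb, hc1, hc2, hab, hac1, hac2, hbc1, hbc2, hc12,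
    hnab, h12, h1a, h1b, h2a, h2b, hcl, ⟨c₃, hc3, h3a, h3b, h31, h32⟩⟩ := hF
  obtain ⟨h3A, h3B, h3cl⟩ := hcl c₃ hc3 h3a h3b h31 h32
  have hbound3 : ∀ u, G.Adj c₃ u → u = a ∨ u = b ∨ u = x := by
    intro u hadj
    by_cases hua : u = a
    · exact Or.inl hua
    by_cases hub : u = b
    · exact Or.inr (Or.inl hub)
    by_cases hux : u = x
    · exact Or.inr (Or.inr hux)
    exact absurd hadj (h3cl u (mem_erase.2 ⟨hux, mem_univ u⟩) hua hub
      (fun h => G.irrefl (h ▸ hadj)))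
  have hx3 : G.Adj c₃ x := adj_of_bounded (hdeg c₃) hbound3
  -- second neighbour of x
  have hcard : 1 < (G.neighborFinset x).card := by
    rw [SimpleGraph.card_neighborFinset_eq_degree]; omega
  obtain ⟨y, hy, hyne⟩ := Finset.exists_mem_ne hcard c₃
  rw [mem_neighborFinset] at hy
  have hyS : y ∈ univ.erase x := mem_erase.2 ⟨fun h => G.irrefl (h ▸ hy), mem_univ y⟩
  have hax : a ≠ x := (mem_erase.1 ha).1
  have hbx : b ≠ x := (mem_erase.1 hb).1
  have h1x : c₁ ≠ x := (mem_erase.1 hc1).1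
  have h2x : c₂ ≠ x := (mem_erase.1 hc2).1
  have h3x : c₃ ≠ x := (mem_erase.1 hc3).1
  by_cases hya : y = a
  · subst hya
    -- x c₃ b c₁ c₂ a x
    exact hasC6 hx3.symm h3B h1b.symm h12 h2a hy.symm
      hbx.symm h1x.symm h2x.symm h31 h32 h3a
      hbc2 hab.symm hac1.symm
  by_cases hyb : y = b
  · subst hyb
    -- x c₃ a c₁ c₂ b x
    exact hasC6 hx3.symm h3A h1a.symm h12 h2b hy.symm
      hax.symm h1x.symm h2x.symm h31 h32 h3b
      hac2 hab hbc1.symm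
  by_cases hy1 : y = c₁
  · subst hy1
    -- x c₃ a c₂ b c₁ x
    exact hasC6 hx3.symm h3A h2a.symm h2b h1b.symm hy.symm
      hax.symm h2x.symm hbx.symm h32 h3b h31
      hab hac1 hc12.symm
  by_cases hy2 : y = c₂
  · subst hy2
    -- x c₃ a c₁ b c₂ x
    exact hasC6 hx3.symm h3A h1a.symm h1b h2b.symm hy.symm
      hax.symm h1x.symm hbx.symm h31 h3b h32
      hab hac2 hc12
  · -- y is another page: x c₃ a c₁ b y x
    obtain ⟨hyA, hyB, _⟩ := hcl y hyS hya hyb hy1 hy2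
    exact hasC6 hx3.symm h3A h1a.symm h1b hyB.symm hy.symm
      hax.symm h1x.symm hbx.symm h31 h3b (fun h => hyne h.symm)
      hab (fun h => hya h.symm) (fun h => hy1 h.symm)

end C6Aux

/-- Every degree 3-critical graph on `n ≥ 6` vertices contains
a cycle of length 6. -/
theorem degree_three_critical_has_C6 {V : Type} [Fintype V]
    (G : SimpleGraph V) (hn : 6 ≤ Fintype.card V)
    (hG : DegreeThreeCritical G) :
    HasCycleOfLength G 6 := by
  classical
  open C6Aux Finset in
  obtain ⟨x, hx3⟩ := exists_deg3 hG hn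
  have hxu : x ∈ (univ : Finset V) := mem_univ x
  have hdpe := dp_erase (G := G) hxu
  have hdx : dIn G univ x = G.degree x := by
    unfold dIn
    rw [SimpleGraph.degree]
    congr 1
    ext u
    simp [SimpleGraph.mem_neighborFinset]
  have hdpu := dp_univ_eq hG
  have hcard : (univ.erase x).card = Fintype.card V - 1 := by
    rw [card_erase_of_mem hxu, card_univ]
  have htight : dp G (univ.erase x) + 6 = 4 * (univ.erase x).card := by
    rw [hcard]
    omega
  have hne : univ.erase x ≠ univ := ne_univ_of_card_lt (by omega)
  have hfam := main_classification hG (univ.erase x).card (univ.erase x) le_rfl hne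
    (by omega) htight
  rcases hfam with hC | hF | hF | hF
  · exact hC
  · exact endF1 hG hn hF
  · exact endF23 hG hn hF
  · exact endF4 hG hn (by omega) hF
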